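/- Let Γ'[4] be the set of matrices M = (a b; c d) in SL(2,ℤ) with a ≡ d ≡ 1 mod 4, b ≡ c ≡ 0 mod 4, and a + b + c ≡ 1 mod 8. Then Γ'[4] is a subgroup of Γ[4] of index 2. -/

import Mathlib

open CongruenceSubgroup Matrix.SpecialLinearGroup

/-- The set `Γ'[4]` of matrices in `Γ[4]` with `a + b + c ≡ 1 mod 8`. -/
def GammaPrime4 : Set (Matrix.SpecialLinearGroup (Fin 2) ℤ) :=
  {M | M ∈ Gamma 4 ∧ ((M 0 0 + M 0 1 + M 1 0 : ℤ) : ZMod 8) = 1}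


lemma int_mod4_one {x : ℤ} (h : (x : ZMod 4) = 1) : ∃ k, x = 1 + 4*k := by
  have h2 : ((x - 1 : ℤ) : ZMod 4) = 0 := by push_cast; rw [h]; ring
  obtain ⟨k, hk⟩ := (ZMod.intCast_zmod_eq_zero_iff_dvd _ 4).mp h2
  exact ⟨k, by omega⟩

lemma int_mod4_zero {x : ℤ} (h : (x : ZMod 4) = 0) : ∃ k, x = 4*k := by
  obtain ⟨k, hk⟩ := (ZMod.intCast_zmod_eq_zero_iff_dvd _ 4).mp h
  exact ⟨k, by omega⟩

lemma gamma4_entries {M : Matrix.SpecialLinearGroup (Fin 2) ℤ} (hM : M ∈ Gamma 4) :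
    ∃ A B C D : ℤ, M 0 0 = 1 + 4*A ∧ M 0 1 = 4*B ∧ M 1 0 = 4*C ∧ M 1 1 = 1 + 4*D := by
  rw [Gamma_mem] at hM
  obtain ⟨A, hA⟩ := int_mod4_one hM.1
  obtain ⟨B, hB⟩ := int_mod4_zero hM.2.1
  obtain ⟨C, hC⟩ := int_mod4_zero hM.2.2.1
  obtain ⟨D, hD⟩ := int_mod4_one hM.2.2.2
  exact ⟨A, B, C, D, hA, hB, hC, hD⟩

lemma int_cast_eq_zmod8 {x y : ℤ} (h : (8:ℤ) ∣ y - x) : ((x : ZMod 8) = (y : ZMod 8)) :=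
  (ZMod.intCast_eq_intCast_iff _ _ _).mpr (Int.modEq_iff_dvd.mpr h)

lemma zmod8_of_one {x : ℤ} (h : ((x : ZMod 8)) = 1) : (8:ℤ) ∣ x - 1 := by
  have h2 : ((x - 1 : ℤ) : ZMod 8) = 0 := by push_cast; rw [h]; ring
  exact (ZMod.intCast_zmod_eq_zero_iff_dvd _ 8).mp h2

lemma sum_mul {M N : Matrix.SpecialLinearGroup (Fin 2) ℤ} (hM : M ∈ Gamma 4) (hN : N ∈ Gamma 4) :
    (((M*N) 0 0 + (M*N) 0 1 + (M*N) 1 0 : ℤ) : ZMod 8)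
      = ((M 0 0 + M 0 1 + M 1 0 : ℤ) : ZMod 8) * ((N 0 0 + N 0 1 + N 1 0 : ℤ) : ZMod 8) := by
  obtain ⟨A, B, C, D, hA, hB, hC, hD⟩ := gamma4_entries hM
  obtain ⟨A', B', C', D', hA', hB', hC', hD'⟩ := gamma4_entries hN
  have e1 : (M * N) 0 0 = M 0 0 * N 0 0 + M 0 1 * N 1 0 := by
    simp [Matrix.mul_apply, Fin.sum_univ_two]
  have e2 : (M * N) 0 1 = M 0 0 * N 0 1 + M 0 1 * N 1 1 := by
    simp [Matrix.mul_apply, Fin.sum_univ_two]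
  have e3 : (M * N) 1 0 = M 1 0 * N 0 0 + M 1 1 * N 1 0 := by
    simp [Matrix.mul_apply, Fin.sum_univ_two]
  rw [← Int.cast_mul]
  apply int_cast_eq_zmod8
  rw [e1, e2, e3, hA, hB, hC, hD, hA', hB', hC', hD']
  exact ⟨-2*(B*D' + D*C' - A*C' - B*A' - B*B' - C*B' - C*C'), by ring⟩

lemma sum_inv {M : Matrix.SpecialLinearGroup (Fin 2) ℤ} (hM : M ∈ Gamma 4)
    (h8 : ((M 0 0 + M 0 1 + M 1 0 : ℤ) : ZMod 8) = 1) :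
    ((M⁻¹ 0 0 + M⁻¹ 0 1 + M⁻¹ 1 0 : ℤ) : ZMod 8) = 1 := by
  obtain ⟨A, B, C, D, hA, hB, hC, hD⟩ := gamma4_entries hM
  have hdet : M 0 0 * M 1 1 - M 0 1 * M 1 0 = 1 := by
    have := M.property; rwa [Matrix.det_fin_two] at this
  rw [hA, hB, hC, hD] at hdet
  have h8' := zmod8_of_one h8
  rw [hA, hB, hC] at h8'
  have e1 : M⁻¹ 0 0 = M 1 1 := by rw [SL2_inv_expl]; rfl
  have e2 : M⁻¹ 0 1 = -(M 0 1) := by rw [SL2_inv_expl]; rfl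
  have e3 : M⁻¹ 1 0 = -(M 1 0) := by rw [SL2_inv_expl]; rfl
  rw [e1, e2, e3, hB, hC, hD]
  rw [show (1 : ZMod 8) = ((1:ℤ) : ZMod 8) by norm_num]
  apply int_cast_eq_zmod8
  have h2 : (2:ℤ) ∣ D - B - C := by
    have hu : (1 + 4*A) * (1 + 4*D) - 4*B*(4*C) = 1 + 4*A + 4*D + 16*(A*D) - 16*(B*C) := by ring
    rw [hu] at hdet
    generalize A*D = u at hdet
    generalize B*C = v at hdet
    omega
  obtain ⟨e, he⟩ := h2
  exact ⟨-e, by linarith⟩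

lemma sum_cases {M : Matrix.SpecialLinearGroup (Fin 2) ℤ} (hM : M ∈ Gamma 4) :
    ((M 0 0 + M 0 1 + M 1 0 : ℤ) : ZMod 8) = 1 ∨ ((M 0 0 + M 0 1 + M 1 0 : ℤ) : ZMod 8) = 5 := by
  obtain ⟨A, B, C, D, hA, hB, hC, hD⟩ := gamma4_entries hM
  rw [hA, hB, hC]
  rcases Int.even_or_odd (A + B + C) with ⟨e, he⟩ | ⟨e, he⟩
  · left
    rw [show (1 : ZMod 8) = ((1:ℤ) : ZMod 8) by norm_num]
    exact int_cast_eq_zmod8 ⟨-e, by linarith⟩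
  · right
    rw [show (5 : ZMod 8) = ((5:ℤ) : ZMod 8) by norm_num]
    exact int_cast_eq_zmod8 ⟨-e, by linarith⟩

def HGP : Subgroup (Matrix.SpecialLinearGroup (Fin 2) ℤ) where
  carrier := GammaPrime4
  one_mem' := ⟨Subgroup.one_mem _, by simp⟩
  mul_mem' := fun {a b} ha hb =>
    ⟨mul_mem ha.1 hb.1, by rw [sum_mul ha.1 hb.1, ha.2, hb.2]; norm_num⟩
  inv_mem' := fun {a} ha => ⟨inv_mem ha.1, sum_inv ha.1 ha.2⟩

lemma mem_HGP {x : Matrix.SpecialLinearGroup (Fin 2) ℤ} :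
    x ∈ HGP ↔ x ∈ Gamma 4 ∧ ((x 0 0 + x 0 1 + x 1 0 : ℤ) : ZMod 8) = 1 := Iff.rfl

def T4 : Matrix.SpecialLinearGroup (Fin 2) ℤ := ⟨!![1,4;0,1], by norm_num [Matrix.det_fin_two_of]⟩

lemma T4_mem : T4 ∈ Gamma 4 := by
  rw [Gamma_mem]
  refine ⟨?_, ?_, ?_, ?_⟩ <;> · show ((_ : ℤ) : ZMod 4) = _; simp [T4]; try decide

lemma T4_sum : ((T4 0 0 + T4 0 1 + T4 1 0 : ℤ) : ZMod 8) = 5 := by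
  show (((1:ℤ) + 4 + 0 : ℤ) : ZMod 8) = 5
  norm_num

theorem gammaPrime4_subgroup_index_two :
    ∃ H : Subgroup (Matrix.SpecialLinearGroup (Fin 2) ℤ),
      (H : Set _) = GammaPrime4 ∧ H ≤ Gamma 4 ∧ H.relIndex (Gamma 4) = 2 := by
  refine ⟨HGP, rfl, fun a ha => ha.1, ?_⟩
  rw [Subgroup.relIndex, Subgroup.index_eq_two_iff]
  refine ⟨⟨T4, T4_mem⟩, fun b => ?_⟩
  have hb4 : (b : Matrix.SpecialLinearGroup (Fin 2) ℤ) ∈ Gamma 4 := b.2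
  set B := (b : Matrix.SpecialLinearGroup (Fin 2) ℤ) with hB
  have hbT : (((B * T4) 0 0 + (B * T4) 0 1 + (B * T4) 1 0 : ℤ) : ZMod 8)
      = ((B 0 0 + B 0 1 + B 1 0 : ℤ) : ZMod 8) * 5 := by
    rw [sum_mul hb4 T4_mem, T4_sum]
  have hmem1 : b * ⟨T4, T4_mem⟩ ∈ HGP.subgroupOf (Gamma 4) ↔ (b : Matrix.SpecialLinearGroup (Fin 2) ℤ) * T4 ∈ HGP := by
    rw [Subgroup.mem_subgroupOf]; rfl
  have hmem2 : b ∈ HGP.subgroupOf (Gamma 4) ↔ (b : Matrix.SpecialLinearGroup (Fin 2) ℤ) ∈ HGP :=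
    Subgroup.mem_subgroupOf
  rcases sum_cases hb4 with h | h
  · refine Or.inr ⟨hmem2.mpr ⟨hb4, h⟩, fun hc => ?_⟩
    have := (hmem1.mp hc).2
    rw [hbT, h] at this
    revert this; decide
  · refine Or.inl ⟨hmem1.mpr ⟨mul_mem hb4 T4_mem, by rw [hbT, h]; decide⟩, fun hc => ?_⟩
    have := (hmem2.mp hc).2
    rw [h] at this
    revert this; decide
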